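/- Let e_1,…,e_{2n} be a symplectic basis of (V,ω) and define ξ: V → S^2V ⊗ V by ξ(v) = (1/(2n+1)) Σ_{i=1}^n (e_i v ⊗ e_{i+n} − e_{i+n} v ⊗ e_i). Then ξ is injective, Sp(V,ω)-equivariant, independent of the choice of symplectic basis, and φ ∘ ξ = Id_V, where φ(u_1u_2 ⊗ v) = ω(u_1,v)u_2 + ω(u_2,v)u_1. -/

import Mathlib

/- Koszul differential A_{p,q} : SᵖV ⊗ Λ^{q-1}V → S^{p-1}V ⊗ ΛᵠV satisfies
   A_{p-1,q+1} ∘ A_{p,q} = 0.  We model the symmetric algebra of V = ℝᵐ as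
   `MvPolynomial (Fin m) ℝ` (products of linear forms are the decomposable
   symmetric tensors) and the exterior algebra by `ExteriorAlgebra`.  The
   (total) Koszul map `A` is any linear map satisfying the defining formula on
   decomposable elements; these span everything, so `A` is the Koszul
   differential and the claim is `A ∘ A = 0`. -/

open TensorProduct

set_option synthInstance.maxHeartbeats 1000000
set_option maxHeartbeats 1000000

noncomputable section

/-- A vector of `ℝᵐ` viewed as a degree-one element of the symmetric algebra. -/
def lin {m : ℕ} (v : Fin m → ℝ) : MvPolynomial (Fin m) ℝ :=
  ∑ i, MvPolynomial.C (v i) * MvPolynomial.X i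

/-- The decomposable symmetric tensor `u 0 ⋯ u (p-1) ∈ SᵖV`. -/
def symProd {m p : ℕ} (u : Fin p → Fin m → ℝ) : MvPolynomial (Fin m) ℝ :=
  ∏ i, lin (u i)

/-- The decomposable alternating tensor `v 0 ∧ ⋯ ∧ v (q-1) ∈ ΛᵠV`. -/
def wdg {m q : ℕ} (v : Fin q → Fin m → ℝ) : ExteriorAlgebra ℝ (Fin m → ℝ) :=
  (List.ofFn fun j => ExteriorAlgebra.ι ℝ (v j)).prod

/-- The model for `⊕_{p,q} SᵖV ⊗ ΛᵠV`. -/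
abbrev MM (m : ℕ) :=
  MvPolynomial (Fin m) ℝ ⊗[ℝ] ExteriorAlgebra ℝ (Fin m → ℝ)

/-- The decomposable element `u 0 ⋯ u (p-1) ⊗ v 0 ∧ ⋯ ∧ v (q-1)` of `SᵖV ⊗ ΛᵠV`. -/
def dec {m p q : ℕ} (u : Fin p → Fin m → ℝ) (v : Fin q → Fin m → ℝ) : MM m :=
  symProd u ⊗ₜ[ℝ] wdg v

/-- The natural action of a linear map `g : V → V` on `Sym V ⊗ Λ V`. -/
def rho {m : ℕ} (g : (Fin m → ℝ) →ₗ[ℝ] (Fin m → ℝ)) : MM m →ₗ[ℝ] MM m :=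
  TensorProduct.map
    (MvPolynomial.aeval (R := ℝ) fun i => lin (g (Pi.single i 1))).toLinearMap
    (ExteriorAlgebra.map g).toLinearMap

/-- `ξ : V → S²V ⊗ V` built from a symplectic basis `e`:
`ξ(v) = (1/(2n+1)) ∑ᵢ (eᵢ v ⊗ e_{i+n} − e_{i+n} v ⊗ eᵢ)`. -/
def xiF {n : ℕ} (e : Fin (n + n) → Fin (n + n) → ℝ) (v : Fin (n + n) → ℝ) :
    MM (n + n) :=
  (1 / (2 * (n : ℝ) + 1)) • ∑ i : Fin n,
    ((lin (e (Fin.castAdd n i)) * lin v) ⊗ₜ[ℝ]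
        ExteriorAlgebra.ι ℝ (e (Fin.natAdd n i)) -
      (lin (e (Fin.natAdd n i)) * lin v) ⊗ₜ[ℝ]
        ExteriorAlgebra.ι ℝ (e (Fin.castAdd n i)))

/-- A symplectic basis: a basis `e` with `ω(eᵢ,eⱼ)=0`, `ω(eᵢ,e_{j+n})=δᵢⱼ`,
`ω(e_{i+n},e_{j+n})=0` for `1 ≤ i,j ≤ n`. -/
def IsSymplecticBasis {n : ℕ}
    (ω : (Fin (n + n) → ℝ) →ₗ[ℝ] (Fin (n + n) → ℝ) →ₗ[ℝ] ℝ)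
    (e : Fin (n + n) → Fin (n + n) → ℝ) : Prop :=
  (∃ b : Module.Basis (Fin (n + n)) ℝ (Fin (n + n) → ℝ), ⇑b = e) ∧
  (∀ i j : Fin n, ω (e (Fin.castAdd n i)) (e (Fin.castAdd n j)) = 0) ∧
  (∀ i j : Fin n, ω (e (Fin.castAdd n i)) (e (Fin.natAdd n j)) =
    if i = j then 1 else 0) ∧
  (∀ i j : Fin n, ω (e (Fin.natAdd n i)) (e (Fin.natAdd n j)) = 0)


namespace SpAux
variable {m : ℕ}

lemma lin_add (v w : Fin m → ℝ) : lin (v + w) = lin v + lin w := by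
  simp [lin, add_mul, Finset.sum_add_distrib]

lemma lin_smul (c : ℝ) (v : Fin m → ℝ) : lin (c • v) = c • lin v := by
  simp [lin, MvPolynomial.smul_eq_C_mul, Finset.mul_sum, mul_assoc]

def linMap (m : ℕ) : (Fin m → ℝ) →ₗ[ℝ] MvPolynomial (Fin m) ℝ :=
  { toFun := lin, map_add' := lin_add, map_smul' := lin_smul }

@[simp] lemma linMap_apply (v : Fin m → ℝ) : linMap m v = lin v := rfl

def delta (m : ℕ) (i : Fin m) : Fin m → ℝ := Pi.single i 1

lemma sum_delta (v : Fin m → ℝ) : ∑ i, v i • delta m i = v := by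
  funext j
  simp [delta, Pi.single_apply, Finset.sum_apply, mul_ite, Finset.sum_ite_eq']

lemma aeval_lin (g : (Fin m → ℝ) →ₗ[ℝ] (Fin m → ℝ)) (w : Fin m → ℝ) :
    (MvPolynomial.aeval (R := ℝ) fun i => lin (g (Pi.single i 1))) (lin w)
      = lin (g w) := by
  have : lin w = ∑ i, w i • MvPolynomial.X (R := ℝ) i := by
    simp [lin, MvPolynomial.smul_eq_C_mul]
  rw [this, map_sum]
  simp only [map_smul, MvPolynomial.aeval_X]
  calc ∑ i, w i • lin (g (Pi.single i 1))
      = ∑ i, linMap m (w i • g (delta m i)) := by simp [delta, lin_smul]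
    _ = linMap m (g (∑ i, w i • delta m i)) := by rw [map_sum g, map_sum]; simp
    _ = lin (g w) := by rw [sum_delta]; rfl

lemma single_add_single_eq (a b c d : Fin m) :
    (Finsupp.single a 1 + Finsupp.single b 1 : Fin m →₀ ℕ)
      = Finsupp.single c 1 + Finsupp.single d 1 ↔
    (a = c ∧ b = d) ∨ (a = d ∧ b = c) := by
  constructor
  · intro h
    by_cases hac : a = c
    · subst hac
      have hb : (Finsupp.single b 1 : Fin m →₀ ℕ) = Finsupp.single d 1 :=
        add_left_cancel h
      exact Or.inl ⟨rfl, (Finsupp.single_left_inj one_ne_zero).mp hb⟩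
    · have ha := DFunLike.congr_fun h c
      simp only [Finsupp.add_apply, Finsupp.single_apply] at ha
      have hbc : b = c := by
        by_contra hbc
        simp [hac, hbc, (Ne.symm hac), fun h => hbc h] at ha
        split_ifs at ha <;> omega
      subst hbc
      have h' : (Finsupp.single a 1 + Finsupp.single b 1 : Fin m →₀ ℕ)
          = Finsupp.single b 1 + Finsupp.single d 1 := h
      rw [add_comm (Finsupp.single b 1)] at h'
      have := add_right_cancel h'
      exact Or.inr ⟨(Finsupp.single_left_inj one_ne_zero).mp this, rfl⟩
  · rintro (⟨rfl, rfl⟩ | ⟨rfl, rfl⟩)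
    · rfl
    · exact add_comm _ _

variable (ω : (Fin m → ℝ) →ₗ[ℝ] (Fin m → ℝ) →ₗ[ℝ] ℝ)

/-- The "contraction" `S²V → Hom(V,V)` built from coefficients. -/
def Phi : MvPolynomial (Fin m) ℝ →ₗ[ℝ] (Fin m → ℝ) →ₗ[ℝ] (Fin m → ℝ) :=
  ∑ a : Fin m, ∑ b : Fin m,
    (MvPolynomial.lcoeff ℝ (Finsupp.single a 1 + Finsupp.single b 1)).smulRight
      ((if a = b then (2:ℝ) else 1) • (ω (delta m a)).smulRight (delta m b))

lemma X_mul_X (a b : Fin m) :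
    (MvPolynomial.X a * MvPolynomial.X b : MvPolynomial (Fin m) ℝ)
      = MvPolynomial.monomial (Finsupp.single a 1 + Finsupp.single b 1) 1 := by
  rw [MvPolynomial.X, MvPolynomial.X, MvPolynomial.monomial_mul, mul_one]

lemma Phi_X_mul_X (a b : Fin m) (w : Fin m → ℝ) :
    Phi ω (MvPolynomial.X a * MvPolynomial.X b) w
      = ω (delta m a) w • delta m b + ω (delta m b) w • delta m a := by
  simp only [Phi, LinearMap.sum_apply, LinearMap.smulRight_apply,
    MvPolynomial.lcoeff_apply, X_mul_X, MvPolynomial.coeff_monomial,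
    single_add_single_eq]
  have key : ∀ c d : Fin m,
      ((if (a = c ∧ b = d) ∨ (a = d ∧ b = c) then (1:ℝ) else 0) •
        ((if c = d then (2:ℝ) else 1) •
          ((ω (delta m c)).smulRight (delta m d)))) w
      = (if c = a ∧ d = b then ω (delta m c) w • delta m d else 0)
        + (if c = b ∧ d = a then ω (delta m c) w • delta m d else 0) := by
    intro c d
    by_cases h1 : c = a ∧ d = b <;> by_cases h2 : c = b ∧ d = a
    · have hor : (a = c ∧ b = d) ∨ (a = d ∧ b = c) := Or.inl ⟨h1.1.symm, h1.2.symm⟩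
      have hcd : c = d := h2.1.trans h1.2.symm
      have hab : a = b := h1.1.symm.trans h2.1
      simp [hor, h1, h2, hab, two_smul, LinearMap.add_apply]
    · have hor : (a = c ∧ b = d) ∨ (a = d ∧ b = c) := Or.inl ⟨h1.1.symm, h1.2.symm⟩
      have hcd : ¬ c = d := fun h => h2 ⟨h.trans h1.2, h.symm.trans h1.1⟩
      have hab : ¬ a = b := fun h => hcd ((h1.1.trans h).trans h1.2.symm)
      simp [hor, hcd, h1, h2, hab]
    · have hor : (a = c ∧ b = d) ∨ (a = d ∧ b = c) := Or.inr ⟨h2.2.symm, h2.1.symm⟩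
      have hcd : ¬ c = d := fun h => h1 ⟨h.trans h2.2, h.symm.trans h2.1⟩
      have hba : ¬ b = a := fun h => hcd ((h2.1.trans h).trans h2.2.symm)
      simp [hor, hcd, h1, h2, hba]
    · have hor : ¬ ((a = c ∧ b = d) ∨ (a = d ∧ b = c)) := by
        rintro (⟨rfl, rfl⟩ | ⟨rfl, rfl⟩)
        · exact h1 ⟨rfl, rfl⟩
        · exact h2 ⟨rfl, rfl⟩
      simp [hor, h1, h2]
  calc (∑ c : Fin m, ∑ d : Fin m,
      ((if (a = c ∧ b = d) ∨ (a = d ∧ b = c) then (1:ℝ) else 0) •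
        ((if c = d then (2:ℝ) else 1) •
          ((ω (delta m c)).smulRight (delta m d)))) w)
      = ∑ c : Fin m, ∑ d : Fin m,
        ((if c = a ∧ d = b then ω (delta m c) w • delta m d else 0)
          + (if c = b ∧ d = a then ω (delta m c) w • delta m d else 0)) := by
        refine Finset.sum_congr rfl fun c _ => Finset.sum_congr rfl fun d _ => key c d
    _ = _ := by
        have hsum : ∀ (f : Fin m → Fin m → (Fin m → ℝ)) (a b : Fin m),
            (∑ c : Fin m, ∑ d : Fin m, if c = a ∧ d = b then f c d else 0) = f a b := by
          intro f a b
          rw [Finset.sum_eq_single a]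
          · rw [Finset.sum_eq_single b]
            · simp
            · intro d _ hd; simp [hd]
            · intro h; exact absurd (Finset.mem_univ b) h
          · intro c _ hc; simp [hc]
          · intro h; exact absurd (Finset.mem_univ a) h
        simp only [Finset.sum_add_distrib]
        rw [hsum, hsum]

/-- The canonical retraction `Sym V ⊗ Λ V → V` extending `φ`. -/
def phi0 : MM m →ₗ[ℝ] (Fin m → ℝ) :=
  TensorProduct.lift ((Phi ω).compl₂ ExteriorAlgebra.ιInv)

lemma phi0_tmul (p : MvPolynomial (Fin m) ℝ) (x : ExteriorAlgebra ℝ (Fin m → ℝ)) :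
    phi0 ω (p ⊗ₜ[ℝ] x) = Phi ω p (ExteriorAlgebra.ιInv x) := rfl

lemma sum_mul_aux (u₁ u₂ w : Fin m → ℝ) :
    ∑ a : Fin m, ∑ b : Fin m,
      (u₁ a * u₂ b) • (ω (delta m a) w • delta m b) = ω u₁ w • u₂ := by
  have h1 : ω u₁ w = ∑ a, u₁ a * ω (delta m a) w := by
    conv_lhs => rw [← sum_delta u₁]
    simp [map_sum, LinearMap.sum_apply, smul_eq_mul]
  calc ∑ a : Fin m, ∑ b : Fin m, (u₁ a * u₂ b) • (ω (delta m a) w • delta m b)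
      = ∑ a : Fin m, (u₁ a * ω (delta m a) w) • ∑ b : Fin m, u₂ b • delta m b := by
        refine Finset.sum_congr rfl fun a _ => ?_
        rw [Finset.smul_sum]
        refine Finset.sum_congr rfl fun b _ => ?_
        rw [smul_smul, smul_smul]
        ring_nf
    _ = (∑ a : Fin m, u₁ a * ω (delta m a) w) • u₂ := by
        rw [sum_delta, ← Finset.sum_smul]
    _ = ω u₁ w • u₂ := by rw [h1]

lemma phi0_prop (u₁ u₂ v : Fin m → ℝ) :
    phi0 ω ((lin u₁ * lin u₂) ⊗ₜ[ℝ] ExteriorAlgebra.ι ℝ v) =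
      ω u₁ v • u₂ + ω u₂ v • u₁ := by
  rw [phi0_tmul, ExteriorAlgebra.ι_leftInverse v]
  have hexp : lin u₁ * lin u₂ = ∑ a : Fin m, ∑ b : Fin m,
      (u₁ a * u₂ b) • (MvPolynomial.X a * MvPolynomial.X b) := by
    rw [lin, lin, Finset.sum_mul_sum]
    refine Finset.sum_congr rfl fun a _ => Finset.sum_congr rfl fun b _ => ?_
    rw [MvPolynomial.smul_eq_C_mul, map_mul]
    ring
  rw [hexp, map_sum, LinearMap.sum_apply]
  have : ∀ a : Fin m, (Phi ω (∑ b : Fin m,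
      (u₁ a * u₂ b) • (MvPolynomial.X a * MvPolynomial.X b))) v
      = ∑ b : Fin m, (u₁ a * u₂ b) •
        (ω (delta m a) v • delta m b + ω (delta m b) v • delta m a) := by
    intro a
    rw [map_sum, LinearMap.sum_apply]
    refine Finset.sum_congr rfl fun b _ => ?_
    rw [map_smul, LinearMap.smul_apply, Phi_X_mul_X]
  rw [Finset.sum_congr rfl fun a _ => this a]
  have split : ∑ a : Fin m, ∑ b : Fin m, (u₁ a * u₂ b) •
      (ω (delta m a) v • delta m b + ω (delta m b) v • delta m a)
      = (∑ a : Fin m, ∑ b : Fin m, (u₁ a * u₂ b) • (ω (delta m a) v • delta m b))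
        + ∑ a : Fin m, ∑ b : Fin m, (u₁ a * u₂ b) • (ω (delta m b) v • delta m a) := by
    simp [smul_add, Finset.sum_add_distrib]
  rw [split, sum_mul_aux]
  congr 1
  rw [Finset.sum_comm]
  calc ∑ b : Fin m, ∑ a : Fin m, (u₁ a * u₂ b) • (ω (delta m b) v • delta m a)
      = ∑ b : Fin m, ∑ a : Fin m, (u₂ b * u₁ a) • (ω (delta m b) v • delta m a) := by
        refine Finset.sum_congr rfl fun b _ => Finset.sum_congr rfl fun a _ => ?_
        ring_nf
    _ = ω u₂ v • u₁ := sum_mul_aux ω u₂ u₁ v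

end SpAux

namespace SpAux
section Sympl
variable {n : ℕ} (ω : (Fin (n + n) → ℝ) →ₗ[ℝ] (Fin (n + n) → ℝ) →ₗ[ℝ] ℝ)

lemma skew (halt : ∀ x, ω x x = 0) (x y : Fin (n + n) → ℝ) :
    ω x y = - ω y x := by
  have h := halt (x + y)
  have hx := halt x
  have hy := halt y
  simp only [map_add, LinearMap.add_apply] at h
  linarith

/-- The ω-dual family of a symplectic basis. -/
def dvec (e : Fin (n + n) → Fin (n + n) → ℝ) (k : Fin (n + n)) : Fin (n + n) → ℝ :=
  Fin.addCases (fun i => -e (Fin.natAdd n i)) (fun i => e (Fin.castAdd n i)) k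

lemma dvec_castAdd (e : Fin (n + n) → Fin (n + n) → ℝ) (i : Fin n) :
    dvec e (Fin.castAdd n i) = -e (Fin.natAdd n i) := by
  rw [dvec, Fin.addCases_left]

lemma dvec_natAdd (e : Fin (n + n) → Fin (n + n) → ℝ) (i : Fin n) :
    dvec e (Fin.natAdd n i) = e (Fin.castAdd n i) := by
  rw [dvec, Fin.addCases_right]

lemma hd (halt : ∀ x, ω x x = 0) (e : Fin (n + n) → Fin (n + n) → ℝ)
    (he : IsSymplecticBasis ω e) (k l : Fin (n + n)) :
    ω (dvec e k) (e l) = if k = l then 1 else 0 := by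
  obtain ⟨-, h1, h2, h3⟩ := he
  have hcc : ∀ i j : Fin n, (Fin.castAdd n i = Fin.castAdd n j) → i = j := by
    intro i j h
    have := Fin.ext_iff.mp h
    simp only [Fin.coe_castAdd] at this
    exact Fin.ext this
  have hnn : ∀ i j : Fin n, (Fin.natAdd n i = Fin.natAdd n j) → i = j := by
    intro i j h
    have := Fin.ext_iff.mp h
    simp only [Fin.coe_natAdd] at this
    exact Fin.ext (by omega)
  have hcn : ∀ i j : Fin n, (Fin.castAdd n i : Fin (n + n)) ≠ Fin.natAdd n j := by
    intro i j h
    have := Fin.ext_iff.mp h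
    simp only [Fin.coe_castAdd, Fin.coe_natAdd] at this
    have hi := i.isLt
    omega
  induction k using Fin.addCases with
  | left i =>
    induction l using Fin.addCases with
    | left j =>
      rw [dvec_castAdd, map_neg, LinearMap.neg_apply,
        skew ω halt (e (Fin.natAdd n i)) (e (Fin.castAdd n j)), neg_neg, h2 j i]
      by_cases h : i = j
      · subst h; rw [if_pos rfl, if_pos rfl]
      · rw [if_neg (fun hh => h hh.symm), if_neg (fun hh => h (hcc i j hh))]
    | right j =>
      rw [dvec_castAdd, map_neg, LinearMap.neg_apply, h3 i j, neg_zero,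
        if_neg (hcn i j)]
  | right i =>
    induction l using Fin.addCases with
    | left j =>
      rw [dvec_natAdd, h1 i j, if_neg (fun hh => hcn j i hh.symm)]
    | right j =>
      rw [dvec_natAdd, h2 i j]
      by_cases h : i = j
      · subst h; rw [if_pos rfl, if_pos rfl]
      · rw [if_neg h, if_neg (fun hh => h (hnn i j hh))]

lemma hrepr (halt : ∀ x, ω x x = 0) (e : Fin (n + n) → Fin (n + n) → ℝ)
    (he : IsSymplecticBasis ω e) (b : Module.Basis (Fin (n + n)) ℝ (Fin (n + n) → ℝ))
    (hb : ⇑b = e) (v : Fin (n + n) → ℝ) (k : Fin (n + n)) :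
    ω (dvec e k) v = b.repr v k := by
  conv_lhs => rw [← b.sum_repr v]
  rw [map_sum]
  simp only [map_smul, smul_eq_mul, hb, hd ω halt e he]
  simp [mul_ite, Finset.sum_ite_eq]

lemma hexp (halt : ∀ x, ω x x = 0) (e : Fin (n + n) → Fin (n + n) → ℝ)
    (he : IsSymplecticBasis ω e) (v : Fin (n + n) → ℝ) :
    ∑ i : Fin n, (ω v (e (Fin.natAdd n i)) • e (Fin.castAdd n i)
      - ω v (e (Fin.castAdd n i)) • e (Fin.natAdd n i)) = v := by
  obtain ⟨b, hb⟩ := he.1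
  conv_rhs => rw [← b.sum_repr v]
  rw [Fin.sum_univ_add (M := Fin (n + n) → ℝ) (a := n) (b := n) (fun k => b.repr v k • b k)]
  rw [Finset.sum_sub_distrib, sub_eq_add_neg]
  congr 1
  · refine Finset.sum_congr rfl fun i _ => ?_
    rw [← hrepr ω halt e he b hb v (Fin.castAdd n i), dvec_castAdd, hb,
      map_neg, LinearMap.neg_apply, skew ω halt (e (Fin.natAdd n i)) v, neg_neg]
  · rw [← Finset.sum_neg_distrib]
    refine Finset.sum_congr rfl fun i _ => ?_
    rw [← hrepr ω halt e he b hb v (Fin.natAdd n i), dvec_natAdd, hb,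
      skew ω halt (e (Fin.castAdd n i)) v, neg_smul]

/-- The basis-independent tensor `∑ eᵢ ⊗ e_{i+n} − e_{i+n} ⊗ eᵢ`. -/
def Uel (e : Fin (n + n) → Fin (n + n) → ℝ) :
    (Fin (n + n) → ℝ) ⊗[ℝ] (Fin (n + n) → ℝ) :=
  ∑ i : Fin n, (e (Fin.castAdd n i) ⊗ₜ[ℝ] e (Fin.natAdd n i)
    - e (Fin.natAdd n i) ⊗ₜ[ℝ] e (Fin.castAdd n i))

/-- The functional `a ⊗ c ↦ ω(x,a)·ω(y,c)` on `V ⊗ V`. -/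
def Fxy (x y : Fin (n + n) → ℝ) :
    (Fin (n + n) → ℝ) ⊗[ℝ] (Fin (n + n) → ℝ) →ₗ[ℝ] ℝ :=
  TensorProduct.lift ((ω x).smulRight (ω y))

lemma Fxy_tmul (x y a c : Fin (n + n) → ℝ) :
    Fxy ω x y (a ⊗ₜ[ℝ] c) = ω x a * ω y c := by
  simp [Fxy, smul_eq_mul]

lemma hFU (halt : ∀ x, ω x x = 0) (e : Fin (n + n) → Fin (n + n) → ℝ)
    (he : IsSymplecticBasis ω e) (x y : Fin (n + n) → ℝ) :
    Fxy ω x y (Uel e) = ω x y := by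
  rw [Uel, map_sum]
  have : ∀ i : Fin n,
      Fxy ω x y (e (Fin.castAdd n i) ⊗ₜ[ℝ] e (Fin.natAdd n i)
        - e (Fin.natAdd n i) ⊗ₜ[ℝ] e (Fin.castAdd n i))
      = ω x (e (Fin.castAdd n i)) * ω y (e (Fin.natAdd n i))
        - ω x (e (Fin.natAdd n i)) * ω y (e (Fin.castAdd n i)) := by
    intro i
    rw [map_sub, Fxy_tmul, Fxy_tmul]
  rw [Finset.sum_congr rfl fun i _ => this i]
  conv_rhs => rw [← hexp ω halt e he y]
  rw [map_sum]
  refine Finset.sum_congr rfl fun i _ => ?_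
  rw [map_sub, map_smul, map_smul, smul_eq_mul, smul_eq_mul]
  ring

lemma reconstruction (halt : ∀ x, ω x x = 0) (e : Fin (n + n) → Fin (n + n) → ℝ)
    (he : IsSymplecticBasis ω e) (b : Module.Basis (Fin (n + n)) ℝ (Fin (n + n) → ℝ))
    (hb : ⇑b = e) (t : (Fin (n + n) → ℝ) ⊗[ℝ] (Fin (n + n) → ℝ)) :
    t = ∑ k : Fin (n + n), ∑ l : Fin (n + n),
      Fxy ω (dvec e k) (dvec e l) t • (e k ⊗ₜ[ℝ] e l) := by
  have hG : ∀ t, (∑ k : Fin (n + n), ∑ l : Fin (n + n),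
      (Fxy ω (dvec e k) (dvec e l)).smulRight (e k ⊗ₜ[ℝ] e l)) t
      = ∑ k : Fin (n + n), ∑ l : Fin (n + n),
        Fxy ω (dvec e k) (dvec e l) t • (e k ⊗ₜ[ℝ] e l) := by
    intro t
    simp [LinearMap.sum_apply]
  have key : (∑ k : Fin (n + n), ∑ l : Fin (n + n),
      (Fxy ω (dvec e k) (dvec e l)).smulRight (e k ⊗ₜ[ℝ] e l)) = LinearMap.id := by
    apply (b.tensorProduct b).ext
    rintro ⟨a, c⟩
    rw [Module.Basis.tensorProduct_apply, hG, hb]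
    simp only [Fxy_tmul, hd ω halt e he]
    simp [ite_mul, ite_smul, Finset.sum_ite_eq]
  have := congrArg (fun f => f t) key
  rw [hG] at this
  exact this.symm

lemma Uel_indep (halt : ∀ x, ω x x = 0)
    (e e' : Fin (n + n) → Fin (n + n) → ℝ)
    (he : IsSymplecticBasis ω e) (he' : IsSymplecticBasis ω e') :
    Uel e = Uel e' := by
  obtain ⟨b, hb⟩ := he.1
  calc Uel e
      = ∑ k : Fin (n + n), ∑ l : Fin (n + n),
        Fxy ω (dvec e k) (dvec e l) (Uel e) • (e k ⊗ₜ[ℝ] e l) :=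
        reconstruction ω halt e he b hb (Uel e)
    _ = ∑ k : Fin (n + n), ∑ l : Fin (n + n),
        Fxy ω (dvec e k) (dvec e l) (Uel e') • (e k ⊗ₜ[ℝ] e l) := by
        refine Finset.sum_congr rfl fun k _ => Finset.sum_congr rfl fun l _ => ?_
        rw [hFU ω halt e he, hFU ω halt e' he']
    _ = Uel e' := (reconstruction ω halt e he b hb (Uel e')).symm

/-- `ξ` factored through `Uel`. -/
def Psi (v : Fin (n + n) → ℝ) :
    (Fin (n + n) → ℝ) ⊗[ℝ] (Fin (n + n) → ℝ) →ₗ[ℝ] MM (n + n) :=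
  TensorProduct.map ((LinearMap.mulRight ℝ (lin v)).comp (linMap (n + n)))
    (ExteriorAlgebra.ι ℝ)

lemma xiF_eq (e : Fin (n + n) → Fin (n + n) → ℝ) (v : Fin (n + n) → ℝ) :
    xiF e v = (1 / (2 * (n : ℝ) + 1)) • Psi v (Uel e) := by
  rw [xiF, Uel, map_sum]
  congr 1
  refine Finset.sum_congr rfl fun i _ => ?_
  rw [map_sub, Psi, TensorProduct.map_tmul, TensorProduct.map_tmul]
  simp [LinearMap.mulRight_apply]

end Sympl
end SpAux

/-- `ξ` is injective, `Sp(V,ω)`-equivariant, independent of the choice of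
symplectic basis, and `φ ∘ ξ = Id` for any linear `φ` with
`φ(u₁u₂ ⊗ v) = ω(u₁,v)u₂ + ω(u₂,v)u₁`. -/
theorem stmt4 (n : ℕ)
    (ω : (Fin (n + n) → ℝ) →ₗ[ℝ] (Fin (n + n) → ℝ) →ₗ[ℝ] ℝ)
    (halt : ∀ x, ω x x = 0)
    (hnd : ∀ x, (∀ y, ω x y = 0) → x = 0)
    (e : Fin (n + n) → Fin (n + n) → ℝ)
    (he : IsSymplecticBasis ω e) :
    Function.Injective (xiF e) ∧
    (∀ g : (Fin (n + n) → ℝ) ≃ₗ[ℝ] (Fin (n + n) → ℝ),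
      (∀ x y, ω (g x) (g y) = ω x y) →
      ∀ v, rho (g : _ →ₗ[ℝ] _) (xiF e v) = xiF e (g v)) ∧
    (∀ e' : Fin (n + n) → Fin (n + n) → ℝ, IsSymplecticBasis ω e' →
      xiF e = xiF e') ∧
    (∀ φ : MM (n + n) →ₗ[ℝ] (Fin (n + n) → ℝ),
      (∀ u₁ u₂ v : Fin (n + n) → ℝ,
        φ ((lin u₁ * lin u₂) ⊗ₜ[ℝ] ExteriorAlgebra.ι ℝ v) =
          ω u₁ v • u₂ + ω u₂ v • u₁) →
      ∀ v, φ (xiF e v) = v) := by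
  have part4 : ∀ φ : MM (n + n) →ₗ[ℝ] (Fin (n + n) → ℝ),
      (∀ u₁ u₂ v : Fin (n + n) → ℝ,
        φ ((lin u₁ * lin u₂) ⊗ₜ[ℝ] ExteriorAlgebra.ι ℝ v) =
          ω u₁ v • u₂ + ω u₂ v • u₁) →
      ∀ v, φ (xiF e v) = v := by
    intro φ hφ v
    have hii : ∀ i : Fin n,
        ω (e (Fin.castAdd n i)) (e (Fin.natAdd n i)) = 1 := by
      intro i; rw [he.2.2.1 i i, if_pos rfl]
    have hii' : ∀ i : Fin n,
        ω (e (Fin.natAdd n i)) (e (Fin.castAdd n i)) = -1 := by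
      intro i; rw [SpAux.skew ω halt, hii i]
    have hterm : ∀ i : Fin n,
        φ ((lin (e (Fin.castAdd n i)) * lin v) ⊗ₜ[ℝ]
            ExteriorAlgebra.ι ℝ (e (Fin.natAdd n i)))
          - φ ((lin (e (Fin.natAdd n i)) * lin v) ⊗ₜ[ℝ]
            ExteriorAlgebra.ι ℝ (e (Fin.castAdd n i)))
        = (2:ℝ) • v + (ω v (e (Fin.natAdd n i)) • e (Fin.castAdd n i)
            - ω v (e (Fin.castAdd n i)) • e (Fin.natAdd n i)) := by
      intro i
      rw [hφ, hφ, hii i, hii' i]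
      module
    rw [xiF, map_smul, map_sum]
    simp only [map_sub]
    rw [Finset.sum_congr rfl fun i _ => hterm i]
    rw [Finset.sum_add_distrib, Finset.sum_const, SpAux.hexp ω halt e he v]
    simp only [Finset.card_univ, Fintype.card_fin]
    have hcast : (n : ℕ) • ((2:ℝ) • v) = (n : ℝ) • ((2:ℝ) • v) :=
      (Nat.cast_smul_eq_nsmul ℝ n ((2:ℝ) • v)).symm
    rw [hcast]
    have hco : (n : ℝ) • ((2:ℝ) • v) + v = (2 * (n:ℝ) + 1) • v := by module
    rw [hco, smul_smul, one_div, inv_mul_cancel₀ (by positivity : (2 * (n:ℝ) + 1) ≠ 0),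
      one_smul]
  have indep : ∀ e' : Fin (n + n) → Fin (n + n) → ℝ,
      IsSymplecticBasis ω e' → xiF e = xiF e' := by
    intro e' he'
    funext v
    rw [SpAux.xiF_eq, SpAux.xiF_eq, SpAux.Uel_indep ω halt e e' he he']
  have inj : Function.Injective (xiF e) := by
    intro v w h
    have hv := part4 (SpAux.phi0 ω) (SpAux.phi0_prop ω) v
    have hw := part4 (SpAux.phi0 ω) (SpAux.phi0_prop ω) w
    rw [← hv, ← hw, h]
  refine ⟨inj, ?_, indep, part4⟩
  intro g hg v
  have hge : IsSymplecticBasis ω (fun k => g (e k)) := by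
    obtain ⟨b, hb⟩ := he.1
    refine ⟨⟨b.map g, funext fun k => by rw [Module.Basis.map_apply, hb]⟩, ?_, ?_, ?_⟩
    · intro i j; rw [hg]; exact he.2.1 i j
    · intro i j; rw [hg]; exact he.2.2.1 i j
    · intro i j; rw [hg]; exact he.2.2.2 i j
  have key : rho (g : _ →ₗ[ℝ] _) (xiF e v) = xiF (fun k => g (e k)) (g v) := by
    rw [xiF, xiF, map_smul]
    congr 1
    rw [rho, map_sum]
    refine Finset.sum_congr rfl fun i _ => ?_
    rw [map_sub, TensorProduct.map_tmul, TensorProduct.map_tmul]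
    simp only [AlgHom.toLinearMap_apply, map_mul, SpAux.aeval_lin,
      ExteriorAlgebra.map_apply_ι]
    rfl
  rw [key, ← indep (fun k => g (e k)) hge]
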